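/- In the weighted-sum error minimization problem: minimize ∑_k c_k·Q^{-1}(ε_k) + d·τ subject to 0 < ε_k ≤ min(τ, ε̂_k) for all k, with c_k > 0, d > 0, and ε̂_1 ≤ ··· ≤ ε̂_K ≤ τ̂ < 1/2, every optimal solution satisfies ε_k* = min(τ*, ε̂_k) for each k, where τ* is the common value for all unconstrained coordinates. -/

import Mathlib

/-- The Gaussian tail function `Q(x) = (1/√(2π)) ∫_x^∞ e^{−t²/2} dt`. -/
noncomputable def gaussQ (x : ℝ) : ℝ :=
  (1 / Real.sqrt (2 * Real.pi)) * ∫ t in Set.Ioi x, Real.exp (-(t ^ 2) / 2)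

/-- The inverse of the Gaussian tail function. -/
noncomputable def gaussQinv : ℝ → ℝ := Function.invFun gaussQ


open MeasureTheory Real Set

lemma gauss_integrable : Integrable (fun t : ℝ => Real.exp (-(t ^ 2) / 2)) := by
  have h := integrable_exp_neg_mul_sq (by norm_num : (0:ℝ) < 1/2)
  have : (fun t : ℝ => Real.exp (-(t ^ 2) / 2)) = fun t : ℝ => Real.exp (-(1/2) * t ^ 2) := by
    funext t; ring_nf
  rw [this]; exact h

lemma gauss_split {a b : ℝ} (hab : a ≤ b) :
    ∫ t in Set.Ioi a, Real.exp (-(t ^ 2) / 2)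
      = (∫ t in Set.Ioc a b, Real.exp (-(t ^ 2) / 2))
        + ∫ t in Set.Ioi b, Real.exp (-(t ^ 2) / 2) := by
  rw [← setIntegral_union (Set.Ioc_disjoint_Ioi le_rfl) measurableSet_Ioi
      gauss_integrable.integrableOn gauss_integrable.integrableOn,
    Set.Ioc_union_Ioi_eq_Ioi hab]

lemma gaussQ_strictAnti : StrictAnti gaussQ := by
  intro a b hab
  unfold gaussQ
  have hc : 0 < 1 / Real.sqrt (2 * Real.pi) := by positivity
  have hpos : 0 < ∫ t in Set.Ioc a b, Real.exp (-(t ^ 2) / 2) := by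
    rw [setIntegral_pos_iff_support_of_nonneg_ae
      (Filter.Eventually.of_forall fun t => (Real.exp_pos _).le)
      gauss_integrable.integrableOn]
    have : Function.support (fun t : ℝ => Real.exp (-(t ^ 2) / 2)) = Set.univ := by
      ext t; simp [Function.mem_support, (Real.exp_pos _).ne']
    rw [this, Set.univ_inter, Real.volume_Ioc]
    simpa using sub_pos.mpr hab
  have := gauss_split hab.le
  nlinarith [this, mul_pos hc hpos]

lemma gaussQ_zero : gaussQ 0 = 1 / 2 := by
  unfold gaussQ
  have : (fun t : ℝ => Real.exp (-(t ^ 2) / 2)) = fun t : ℝ => Real.exp (-(1/2) * t ^ 2) := by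
    funext t; ring_nf
  rw [this, integral_gaussian_Ioi]
  rw [show Real.pi / (1/2) = 2 * Real.pi by ring]
  have h : (0:ℝ) < Real.sqrt (2 * Real.pi) := Real.sqrt_pos.mpr (by positivity)
  field_simp

lemma gaussQ_tendsto : Filter.Tendsto gaussQ Filter.atTop (nhds 0) := by
  have hint := gauss_integrable
  have h1 : Filter.Tendsto (fun b : ℝ => ∫ t in (0:ℝ)..b, Real.exp (-(t ^ 2) / 2))
      Filter.atTop (nhds (∫ t in Set.Ioi (0:ℝ), Real.exp (-(t ^ 2) / 2))) :=
    intervalIntegral_tendsto_integral_Ioi 0 hint.integrableOn Filter.tendsto_id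
  have h2 : Filter.Tendsto
      (fun b : ℝ => (1 / Real.sqrt (2 * Real.pi)) *
        ((∫ t in Set.Ioi (0:ℝ), Real.exp (-(t ^ 2) / 2)) - ∫ t in (0:ℝ)..b, Real.exp (-(t ^ 2) / 2)))
      Filter.atTop (nhds ((1 / Real.sqrt (2 * Real.pi)) * 0)) := by
    apply Filter.Tendsto.const_mul
    have h3 := h1.const_sub (∫ t in Set.Ioi (0:ℝ), Real.exp (-(t ^ 2) / 2))
    simpa using h3
  rw [mul_zero] at h2
  apply h2.congr'
  filter_upwards [Filter.eventually_ge_atTop (0:ℝ)] with b hb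
  unfold gaussQ
  rw [intervalIntegral.integral_of_le hb, gauss_split hb]
  ring

lemma gaussQ_surj {y : ℝ} (hy0 : 0 < y) (hy : y < 1 / 2) : ∃ x, gaussQ x = y := by
  obtain ⟨X, hX⟩ := (gaussQ_tendsto.eventually (eventually_lt_nhds hy0)).exists
  set X' := max X 0 with hX'
  have hX'0 : (0:ℝ) ≤ X' := le_max_right _ _
  have hQX' : gaussQ X' < y := by
    rcases le_or_gt X 0 with h | h
    · calc gaussQ X' ≤ gaussQ X := gaussQ_strictAnti.antitone (le_max_left _ _)
      _ < y := hX
    · have : X' = X := max_eq_left (le_of_lt h)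
      rw [this]; exact hX
  -- continuity of gaussQ on Icc 0 X'
  have hcont : ContinuousOn gaussQ (Set.Icc 0 X') := by
    have hprim : ContinuousOn (fun x => ∫ t in Set.Ioc (0:ℝ) x, Real.exp (-(t ^ 2) / 2))
        (Set.Icc 0 X') := intervalIntegral.continuousOn_primitive gauss_integrable.integrableOn
    have hcon : ContinuousOn
        (fun x => (1 / Real.sqrt (2 * Real.pi)) *
          ((∫ t in Set.Ioi (0:ℝ), Real.exp (-(t ^ 2) / 2))
            - ∫ t in Set.Ioc (0:ℝ) x, Real.exp (-(t ^ 2) / 2))) (Set.Icc 0 X') :=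
      (continuousOn_const.sub hprim).const_smul (1 / Real.sqrt (2 * Real.pi))
    apply ContinuousOn.congr hcon
    intro x hx
    unfold gaussQ
    simp only [smul_eq_mul]
    rw [gauss_split hx.1]
    ring
  have hmem : y ∈ Set.Icc (gaussQ X') (gaussQ 0) := ⟨hQX'.le, by rw [gaussQ_zero]; exact hy.le⟩
  obtain ⟨x, _, hx⟩ := intermediate_value_Icc' hX'0 hcont hmem
  exact ⟨x, hx⟩

lemma gaussQinv_lt {u v : ℝ} (hu : 0 < u) (huv : u < v) (hv : v < 1 / 2) :
    gaussQinv v < gaussQinv u := by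
  have hQu : gaussQ (gaussQinv u) = u := Function.invFun_eq (gaussQ_surj hu (huv.trans hv))
  have hQv : gaussQ (gaussQinv v) = v := Function.invFun_eq (gaussQ_surj (hu.trans huv) hv)
  by_contra h
  push_neg at h
  rcases eq_or_lt_of_le h with h | h
  · rw [← hQu, ← hQv, h] at huv; exact lt_irrefl _ huv
  · have := gaussQ_strictAnti h
    rw [hQu, hQv] at this
    exact absurd (huv.trans this) (lt_irrefl _)

/-- Structure of the optimal error probabilities: in the weighted-sum minimization of
`∑_k c_k·Q⁻¹(ε_k) + d·τ` over `0 < ε_k ≤ min(τ, ε̂_k)` and `0 < τ ≤ τ̂`, with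
`c_k > 0`, `d > 0`, `0 < ε̂_1 ≤ ⋯ ≤ ε̂_K ≤ τ̂ < 1/2`, every optimal solution
satisfies `ε_k* = min(τ*, ε̂_k)` for each `k`. -/
theorem stmt_15 (K : ℕ) (c : Fin K → ℝ) (d : ℝ) (εhat : Fin K → ℝ) (τhat : ℝ)
    (hc : ∀ k, 0 < c k) (hd : 0 < d) (hεpos : ∀ k, 0 < εhat k)
    (hsorted : ∀ i j : Fin K, i ≤ j → εhat i ≤ εhat j)
    (hεhat : ∀ k, εhat k ≤ τhat) (hτhat : τhat < 1 / 2)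
    (ε : Fin K → ℝ) (τ : ℝ)
    (hfeas : (∀ k, 0 < ε k ∧ ε k ≤ min τ (εhat k)) ∧ 0 < τ ∧ τ ≤ τhat)
    (hopt : ∀ (ε' : Fin K → ℝ) (τ' : ℝ),
      ((∀ k, 0 < ε' k ∧ ε' k ≤ min τ' (εhat k)) ∧ 0 < τ' ∧ τ' ≤ τhat) →
      ∑ k, c k * gaussQinv (ε k) + d * τ ≤ ∑ k, c k * gaussQinv (ε' k) + d * τ') :
    ∀ k, ε k = min τ (εhat k) := by
  intro k
  obtain ⟨hfk, hτ0, hττ⟩ := hfeas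
  obtain ⟨hk0, hkle⟩ := hfk k
  rcases eq_or_lt_of_le hkle with h | hlt
  · exact h
  · exfalso
    set m := min τ (εhat k) with hm
    have hm0 : 0 < m := lt_min hτ0 (hεpos k)
    have hmhalf : m < 1 / 2 := lt_of_le_of_lt (min_le_right _ _) (lt_of_le_of_lt (hεhat k) hτhat)
    set ε' := Function.update ε k m with hε'
    have hfeas' : (∀ j, 0 < ε' j ∧ ε' j ≤ min τ (εhat j)) ∧ 0 < τ ∧ τ ≤ τhat := by
      refine ⟨fun j => ?_, hτ0, hττ⟩
      by_cases hj : j = k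
      · subst hj; simp [hε', Function.update_self, hm0]; exact ⟨min_le_left _ _, min_le_right _ _⟩
      · simp only [hε', Function.update_of_ne hj]; exact hfk j
    have hle := hopt ε' τ hfeas'
    have hQ : gaussQinv m < gaussQinv (ε k) := gaussQinv_lt hk0 hlt hmhalf
    have hsum : ∑ j, c j * gaussQinv (ε' j) < ∑ j, c j * gaussQinv (ε j) := by
      rw [← Finset.sum_erase_add _ _ (Finset.mem_univ k),
          ← Finset.sum_erase_add _ (fun j => c j * gaussQinv (ε j)) (Finset.mem_univ k)]
      have heq : ∑ j ∈ Finset.univ.erase k, c j * gaussQinv (ε' j)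
          = ∑ j ∈ Finset.univ.erase k, c j * gaussQinv (ε j) := by
        apply Finset.sum_congr rfl
        intro j hj
        rw [hε', Function.update_of_ne (Finset.ne_of_mem_erase hj)]
      rw [heq, hε', Function.update_self]
      exact add_lt_add_right (mul_lt_mul_of_pos_left hQ (hc k)) _
    linarith
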